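/- Let ℓ₁, ℓ₂ be positive integers and Gₙ as above. Then for 0 ≤ m ≠ n ≤ min(ℓ₁,ℓ₂), 𝓛(Gₘ Gₙ) = 0, and 𝓛(Gₙ²) = n! (-ℓ₂)ₙ (ℓ₁+ℓ₂+1-n) / ((-ℓ₁)ₙ (-ℓ₁-ℓ₂)ₙ (ℓ₁+ℓ₂+1-2n)). -/

import Mathlib

open Polynomial

/-- Pochhammer symbol `(a)_n = a(a+1)⋯(a+n-1)`. -/
def poch {R : Type*} [CommRing R] (a : R) (n : ℕ) : R :=
  ∏ i ∈ Finset.range n, (a + i)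

/-- The polynomial `Gₙ` (normalized Jacobi with negative integer parameters). -/
noncomputable def jacGpoly (l1 l2 : ℕ) (n : ℕ) : Polynomial ℚ :=
  ∑ k ∈ Finset.range (n + 1),
    C (poch (-(n : ℚ)) k * poch ((n : ℚ) - l1 - l2 - 1) k /
        (poch (-(l1 : ℚ)) k * (k.factorial : ℚ))) *
      ((1 - X) * C (1 / 2)) ^ k

namespace JacAux

lemma poch_zero (a : ℚ) : poch a 0 = 1 := by simp [poch]

lemma poch_succ (a : ℚ) (n : ℕ) : poch a (n + 1) = poch a n * (a + n) := by
  simp [poch, Finset.prod_range_succ]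

lemma poch_succ' (a : ℚ) (n : ℕ) : poch a (n + 1) = a * poch (a + 1) n := by
  rw [poch, Finset.prod_range_succ']
  rw [Finset.prod_congr rfl (fun i (_ : i ∈ Finset.range n) =>
    (by push_cast; ring : a + ((i + 1 : ℕ) : ℚ) = (a + 1) + (i : ℚ)))]
  simp [poch, mul_comm]

lemma poch_ne_zero (a : ℚ) (n : ℕ) (h : ∀ i : ℕ, i < n → a + i ≠ 0) :
    poch a n ≠ 0 := by
  rw [poch]
  exact Finset.prod_ne_zero_iff.mpr fun i hi => h i (Finset.mem_range.mp hi)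

lemma poch_nat_eq_zero (j n : ℕ) (h : j < n) : poch (-(j : ℚ)) n = 0 := by
  rw [poch]
  apply Finset.prod_eq_zero (Finset.mem_range.mpr h)
  simp

lemma poch_add (a : ℚ) (m n : ℕ) : poch a (m + n) = poch a m * poch (a + m) n := by
  rw [poch, poch, poch, Finset.prod_range_add]
  congr 1
  refine Finset.prod_congr rfl fun i _ => ?_
  push_cast; ring

/-- (a-1)_{k}·(a-1+k) = (a-1)·(a)_k , stated shifted: (x+1)ₙ·x = (x)ₙ·(x+n) -/
lemma poch_shift (x : ℚ) (n : ℕ) : poch (x + 1) n * x = poch x n * (x + n) := by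
  have h1 := poch_succ x n
  have h2 := poch_succ' x n
  rw [h1] at h2
  linarith [h2]

lemma poch_mul_reflect (x : ℚ) (n : ℕ) :
    poch (-(n : ℚ)) n * poch x n = (n.factorial : ℚ) * poch (1 - x - n) n := by
  induction n with
  | zero => simp [poch]
  | succ n ih =>
    have e1 : poch (-((n+1 : ℕ) : ℚ)) (n + 1) = (-((n:ℚ)+1)) * poch (-(n:ℚ)) n := by
      rw [show (-((n+1 : ℕ) : ℚ)) = (-((n:ℚ)+1)) by push_cast; ring, poch_succ']
      congr 2
      ring
    have e2 : poch x (n + 1) = poch x n * (x + n) := poch_succ x n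
    have e3 : poch (1 - x - ((n+1:ℕ) : ℚ)) (n + 1)
        = (1 - x - ((n:ℚ)+1)) * poch (1 - x - (n:ℚ)) n := by
      rw [show (1 - x - ((n+1 : ℕ) : ℚ)) = (1 - x - ((n:ℚ)+1)) by push_cast; ring, poch_succ']
      congr 2
      ring
    rw [e1, e2, e3, Nat.factorial_succ]
    push_cast
    linear_combination (-((n:ℚ) + 1) * (x + (n:ℚ))) * ih

end JacAux

namespace JacAux

/-- Summand of the Saalschütz sum. -/
noncomputable def pterm (a b c : ℚ) (n k : ℕ) : ℚ :=
  poch (-(n : ℚ)) k * poch a k * poch b k /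
    (poch c k * poch (1 + a + b - c - n) k * (k.factorial : ℚ))

lemma pterm_top (a b c : ℚ) (n k : ℕ) (h : n < k) : pterm a b c n k = 0 := by
  rw [pterm, poch_nat_eq_zero n k h]
  simp

/-- WZ certificate function. -/
noncomputable def wzg (a b c : ℚ) (n : ℕ) (k : ℕ) : ℚ :=
  (k : ℚ) * (1 - c - k) / (((n : ℚ) + 1) * (c + n)) * pterm a b c (n + 1) k

set_option maxHeartbeats 1000000 in
lemma step_core (Q Cc E F a b c nq kq : ℚ)
    (hC : Cc ≠ 0) (hE : E ≠ 0) (hF : F ≠ 0)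
    (h3 : c + kq ≠ 0) (h4 : a + b - c - nq + kq ≠ 0) (h5 : a + b - c - nq ≠ 0)
    (h6 : c + nq ≠ 0) (hn : nq + 1 ≠ 0) (hk1 : kq + 1 ≠ 0) :
    Q / (Cc * E * F)
      - (c - a + nq) * (c - b + nq) / ((c + nq) * (c - a - b + nq)) *
        (Q * (-nq - 1 + kq) / (-nq - 1) / (Cc * (E * (a + b - c - nq + kq) / (a + b - c - nq)) * F))
    = (kq + 1) * (1 - c - (kq + 1)) / ((nq + 1) * (c + nq)) *
        (Q * (-nq - 1 + kq) * (a + kq) * (b + kq) /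
          ((Cc * (c + kq)) * (E * (a + b - c - nq + kq)) * ((kq + 1) * F)))
      - kq * (1 - c - kq) / ((nq + 1) * (c + nq)) * (Q / (Cc * E * F)) := by
  have hn' : -nq - 1 ≠ 0 := fun h => hn (by linarith)
  have h5' : c - a - b + nq ≠ 0 := fun h => h5 (by linarith)
  field_simp
  ring

lemma step_k (a b c : ℚ) (n k : ℕ)
    (h1 : poch c k ≠ 0) (h2 : poch (a + b - c - (n : ℚ)) k ≠ 0)
    (h3 : c + (k : ℚ) ≠ 0) (h4 : a + b - c - (n : ℚ) + k ≠ 0)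
    (h5 : a + b - c - (n : ℚ) ≠ 0) (h6 : c + (n : ℚ) ≠ 0) :
    pterm a b c (n + 1) k
      - (c - a + n) * (c - b + n) / ((c + n) * (c - a - b + n)) * pterm a b c n k
    = wzg a b c n (k + 1) - wzg a b c n k := by
  have hnn : (-(n : ℚ) - 1) ≠ 0 := by
    have : (0:ℚ) ≤ (n:ℚ) := n.cast_nonneg
    intro h; linarith
  have hfac : (k.factorial : ℚ) ≠ 0 := by exact_mod_cast k.factorial_ne_zero
  set P := poch (-(n : ℚ) - 1) k with hP
  set A := poch a k with hA
  set B := poch b k with hB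
  set Cc := poch c k with hCc
  set E := poch (a + b - c - (n : ℚ)) k with hE
  set F := (k.factorial : ℚ) with hF
  have eN : poch (-(n : ℚ)) k = P * (-(n : ℚ) - 1 + k) / (-(n : ℚ) - 1) := by
    rw [eq_div_iff hnn, hP]
    have := poch_shift (-(n : ℚ) - 1) k
    rw [show (-(n : ℚ) - 1 + 1) = -(n : ℚ) by ring] at this
    linarith [this]
  have eE : poch (1 + a + b - c - (n : ℚ)) k
      = E * (a + b - c - (n : ℚ) + k) / (a + b - c - (n : ℚ)) := by
    rw [eq_div_iff h5, hE]
    have := poch_shift (a + b - c - (n : ℚ)) k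
    rw [show (a + b - c - (n : ℚ) + 1) = 1 + a + b - c - (n : ℚ) by ring] at this
    linarith [this]
  have E1 : pterm a b c (n + 1) k = P * A * B / (Cc * E * F) := by
    rw [pterm, show (-(((n : ℕ) + 1 : ℕ) : ℚ)) = -(n : ℚ) - 1 by push_cast; ring,
      show (1 + a + b - c - (((n : ℕ) + 1 : ℕ) : ℚ)) = a + b - c - (n : ℚ) by push_cast; ring]
  have E2 : pterm a b c n k
      = P * A * B * (-(n:ℚ) - 1 + k) / (-(n:ℚ) - 1) /
          (Cc * (E * (a + b - c - (n:ℚ) + k) / (a + b - c - (n:ℚ))) * F) := by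
    rw [pterm, eN, eE]; ring
  have E3 : pterm a b c (n + 1) (k + 1)
      = P * A * B * (-(n:ℚ) - 1 + k) * (a + k) * (b + k) /
          ((Cc * (c + k)) * (E * (a + b - c - (n:ℚ) + k)) * (((k:ℚ) + 1) * F)) := by
    rw [pterm, show (-(((n : ℕ) + 1 : ℕ) : ℚ)) = -(n : ℚ) - 1 by push_cast; ring,
      show (1 + a + b - c - (((n : ℕ) + 1 : ℕ) : ℚ)) = a + b - c - (n : ℚ) by push_cast; ring,
      poch_succ, poch_succ, poch_succ, poch_succ, poch_succ, Nat.factorial_succ]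
    push_cast
    rw [hP, hA, hB, hCc, hE, hF]
    ring
  have W1 : wzg a b c n (k + 1)
      = ((k:ℚ) + 1) * (1 - c - ((k:ℚ) + 1)) / (((n:ℚ) + 1) * (c + n)) *
          pterm a b c (n + 1) (k + 1) := by
    rw [wzg]; push_cast; ring
  have W0 : wzg a b c n k
      = (k:ℚ) * (1 - c - (k:ℚ)) / (((n:ℚ) + 1) * (c + n)) * pterm a b c (n + 1) k := rfl
  rw [W0, W1, E3, E2, E1]
  have hn1 : ((n:ℚ) + 1) ≠ 0 := by positivity
  have hk1 : ((k:ℚ) + 1) ≠ 0 := by positivity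
  have := step_core (P * A * B) Cc E F a b c (n:ℚ) (k:ℚ) h1 h2 hfac h3 h4 h5 h6 hn1 hk1
  linarith [this]

lemma wzg_zero (a b c : ℚ) (n : ℕ) : wzg a b c n 0 = 0 := by
  simp [wzg]

lemma PS (a b c : ℚ) : ∀ n : ℕ,
    (∀ j : ℕ, j < n → c + (j : ℚ) ≠ 0) →
    (∀ j : ℕ, 1 ≤ j → j ≤ n → 1 + a + b - c - (j : ℚ) ≠ 0) →
    ∑ k ∈ Finset.range (n + 1), pterm a b c n k
      = poch (c - a) n * poch (c - b) n / (poch c n * poch (c - a - b) n) := by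
  intro n
  induction n with
  | zero =>
    intro _ _
    simp [pterm, poch]
  | succ n ih =>
    intro hc he
    have hn1 : ((n : ℚ) + 1) ≠ 0 := by positivity
    have h6 : c + (n : ℚ) ≠ 0 := hc n (by omega)
    have h5 : a + b - c - (n : ℚ) ≠ 0 := by
      have := he (n + 1) (by omega) (by omega)
      intro h; apply this; push_cast; linarith
    have hcab : c - a - b + (n : ℚ) ≠ 0 := fun h => h5 (by linarith)
    have hEfac : ∀ i : ℕ, i ≤ n → a + b - c - (n : ℚ) + (i : ℚ) ≠ 0 := by
      intro i hi
      have hj := he (n + 1 - i) (by omega) (by omega)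
      intro h; apply hj
      rw [Nat.cast_sub (by omega)]
      push_cast; linarith
    have key : ∀ k ∈ Finset.range (n + 2),
        pterm a b c (n + 1) k
          - (c - a + n) * (c - b + n) / ((c + n) * (c - a - b + n)) * pterm a b c n k
        = wzg a b c n (k + 1) - wzg a b c n k := by
      intro k hk
      rcases Nat.lt_or_ge k (n + 1) with hkn | hkn
      · have hkn' : k ≤ n := by omega
        apply step_k a b c n k
        · exact poch_ne_zero _ _ fun i hi => hc i (by omega)
        · exact poch_ne_zero _ _ fun i hi => hEfac i (by omega)
        · exact hc k (by omega)
        · exact hEfac k hkn'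
        · exact h5
        · exact h6
      · have hk2 : k = n + 1 := by
          have := Finset.mem_range.mp hk; omega
        subst hk2
        have hz1 : pterm a b c n (n + 1) = 0 := pterm_top a b c n (n + 1) (by omega)
        have hz2 : wzg a b c n (n + 1 + 1) = 0 := by
          rw [wzg, pterm_top a b c (n + 1) (n + 2) (by omega)]; ring
        have hz3 : wzg a b c n (n + 1) = - pterm a b c (n + 1) (n + 1) := by
          rw [wzg]
          have : (((n:ℕ) + 1 : ℕ) : ℚ) * (1 - c - (((n:ℕ) + 1 : ℕ) : ℚ))
              / (((n : ℚ) + 1) * (c + n)) = -1 := by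
            rw [div_eq_iff (mul_ne_zero hn1 h6)]; push_cast; ring
          rw [this]; ring
        rw [hz1, hz2, hz3]; ring
    have tele : ∑ k ∈ Finset.range (n + 2), (wzg a b c n (k + 1) - wzg a b c n k)
        = wzg a b c n (n + 2) - wzg a b c n 0 := Finset.sum_range_sub (wzg a b c n) (n + 2)
    have hz2 : wzg a b c n (n + 2) = 0 := by
      rw [wzg, pterm_top a b c (n + 1) (n + 2) (by omega)]; ring
    have main : ∑ k ∈ Finset.range (n + 2), pterm a b c (n + 1) k
        = (c - a + n) * (c - b + n) / ((c + n) * (c - a - b + n)) *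
            ∑ k ∈ Finset.range (n + 2), pterm a b c n k := by
      have := Finset.sum_congr rfl key
      rw [Finset.sum_sub_distrib, ← Finset.mul_sum] at this
      rw [tele, hz2, wzg_zero] at this
      linarith [this]
    have ihs : ∑ k ∈ Finset.range (n + 2), pterm a b c n k
        = poch (c - a) n * poch (c - b) n / (poch c n * poch (c - a - b) n) := by
      rw [Finset.sum_range_succ, pterm_top a b c n (n + 1) (by omega), add_zero]
      exact ih (fun j hj => hc j (by omega)) (fun j h1j h2j => he j h1j (by omega))
    rw [main, ihs]
    have hpc : poch c n ≠ 0 := poch_ne_zero _ _ fun i hi => hc i (by omega)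
    have hpcab : poch (c - a - b) n ≠ 0 := by
      refine poch_ne_zero _ _ fun i hi => ?_
      have := he (i + 1) (by omega) (by omega)
      intro h; apply this; push_cast; linarith
    rw [poch_succ (c - a), poch_succ (c - b), poch_succ c, poch_succ (c - a - b)]
    field_simp

noncomputable def gcoef (l1 l2 n k : ℕ) : ℚ :=
  poch (-(n : ℚ)) k * poch ((n : ℚ) - l1 - l2 - 1) k /
    (poch (-(l1 : ℚ)) k * (k.factorial : ℚ))

lemma inner_sum (l1 l2 n k : ℕ) (hn1 : n ≤ l1) (hn2 : n ≤ l2)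
    (hk1 : k ≤ l1) (hk2 : k ≤ l2) :
    ∑ j ∈ Finset.range (n + 1), gcoef l1 l2 n j *
        (poch (-(l1 : ℚ)) (j + k) / poch (-(l1 : ℚ) - (l2 : ℚ)) (j + k))
    = poch (-(l1 : ℚ)) k / poch (-(l1 : ℚ) - (l2 : ℚ)) k *
        (poch ((l2 : ℚ) + 1 - n) n * poch (-(k : ℚ)) n /
          (poch (-(l1 : ℚ)) n * poch ((l1 : ℚ) + l2 + 1 - n - k) n)) := by
  set a : ℚ := (n : ℚ) - l1 - l2 - 1 with ha
  set b : ℚ := (k : ℚ) - l1 with hb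
  set c : ℚ := -(l1 : ℚ) with hc0
  have termeq : ∀ j ∈ Finset.range (n + 1),
      gcoef l1 l2 n j * (poch (-(l1 : ℚ)) (j + k) / poch (-(l1 : ℚ) - (l2 : ℚ)) (j + k))
      = poch (-(l1 : ℚ)) k / poch (-(l1 : ℚ) - (l2 : ℚ)) k * pterm a b c n j := by
    intro j _
    rw [Nat.add_comm j k, poch_add (-(l1 : ℚ)) k j, poch_add (-(l1 : ℚ) - (l2 : ℚ)) k j,
      show (-(l1 : ℚ) + (k : ℚ)) = b by rw [hb]; ring,
      show (-(l1 : ℚ) - (l2 : ℚ) + (k : ℚ)) = 1 + a + b - c - (n : ℚ) by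
        rw [ha, hb, hc0]; ring]
    rw [gcoef, pterm, hc0]
    ring
  rw [Finset.sum_congr rfl termeq, ← Finset.mul_sum]
  have hps := PS a b c n
    (by
      intro j hj h
      have : (j : ℚ) < (l1 : ℚ) := by exact_mod_cast (by omega : j < l1)
      rw [hc0] at h; linarith)
    (by
      intro j hj1 hj2 h
      have c1 : (n : ℚ) ≤ (l1 : ℚ) := by exact_mod_cast hn1
      have c2 : (k : ℚ) ≤ (l2 : ℚ) := by exact_mod_cast hk2
      have c3 : (1 : ℚ) ≤ (j : ℚ) := by exact_mod_cast hj1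
      rw [ha, hb, hc0] at h; linarith)
  rw [hps, show c - a - b = (l1 : ℚ) + l2 + 1 - n - k by rw [ha, hb, hc0]; ring,
    show c - b = -(k : ℚ) by rw [hb, hc0]; ring,
    show c - a = (l2 : ℚ) + 1 - n by rw [ha, hc0]; ring, hc0]

lemma L_apply (l1 l2 : ℕ) (L : Polynomial ℚ →ₗ[ℚ] ℚ)
    (hL : ∀ m : ℕ, m ≤ l1 + l2 →
      L (((1 - X) * C (1 / 2)) ^ m) =
        poch (-(l1 : ℚ)) m / poch (-(l1 : ℚ) - (l2 : ℚ)) m)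
    (m n : ℕ) (hm : m ≤ l1) (hn : n ≤ l2) :
    L (jacGpoly l1 l2 m * jacGpoly l1 l2 n)
    = ∑ j ∈ Finset.range (m + 1), gcoef l1 l2 m j *
        ∑ k ∈ Finset.range (n + 1), gcoef l1 l2 n k *
          (poch (-(l1 : ℚ)) (k + j) / poch (-(l1 : ℚ) - (l2 : ℚ)) (k + j)) := by
  have hexp : jacGpoly l1 l2 m * jacGpoly l1 l2 n
      = ∑ j ∈ Finset.range (m + 1), ∑ k ∈ Finset.range (n + 1),
          (gcoef l1 l2 m j * gcoef l1 l2 n k) • (((1 - X) * C (1/2 : ℚ)) ^ (k + j)) := by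
    rw [jacGpoly, jacGpoly, Finset.sum_mul_sum]
    refine Finset.sum_congr rfl fun j _ => Finset.sum_congr rfl fun k _ => ?_
    simp only [gcoef, Polynomial.smul_eq_C_mul, C_mul, pow_add]
    ring
  rw [hexp, map_sum]
  refine Finset.sum_congr rfl fun j hj => ?_
  rw [map_sum, Finset.mul_sum]
  refine Finset.sum_congr rfl fun k hk => ?_
  rw [map_smul, smul_eq_mul, hL (k + j) (by
    have : k ≤ n := by have := Finset.mem_range.mp hk; omega
    have : j ≤ m := by have := Finset.mem_range.mp hj; omega
    omega)]
  ring

lemma L_zero_of_lt (l1 l2 : ℕ) (L : Polynomial ℚ →ₗ[ℚ] ℚ)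
    (hL : ∀ m : ℕ, m ≤ l1 + l2 →
      L (((1 - X) * C (1 / 2)) ^ m) =
        poch (-(l1 : ℚ)) m / poch (-(l1 : ℚ) - (l2 : ℚ)) m)
    (m n : ℕ) (hm : m ≤ min l1 l2) (hn : n ≤ min l1 l2) (hmn : m < n) :
    L (jacGpoly l1 l2 m * jacGpoly l1 l2 n) = 0 := by
  rw [L_apply l1 l2 L hL m n (by omega) (by omega)]
  refine Finset.sum_eq_zero fun j hj => ?_
  have hjm : j ≤ m := by have := Finset.mem_range.mp hj; omega
  rw [inner_sum l1 l2 n j (by omega) (by omega) (by omega) (by omega),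
    poch_nat_eq_zero j n (by omega)]
  simp

end JacAux

theorem jacG_orthogonality (l1 l2 : ℕ) (h1 : 0 < l1) (h2 : 0 < l2)
    (L : Polynomial ℚ →ₗ[ℚ] ℚ)
    (hL : ∀ m : ℕ, m ≤ l1 + l2 →
      L (((1 - X) * C (1 / 2)) ^ m) =
        poch (-(l1 : ℚ)) m / poch (-(l1 : ℚ) - (l2 : ℚ)) m)
    (m n : ℕ) (hm : m ≤ min l1 l2) (hn : n ≤ min l1 l2) :
    (m ≠ n → L (jacGpoly l1 l2 m * jacGpoly l1 l2 n) = 0) ∧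
    L (jacGpoly l1 l2 n * jacGpoly l1 l2 n) =
      (n.factorial : ℚ) * poch (-(l2 : ℚ)) n * ((l1 : ℚ) + l2 + 1 - n) /
        (poch (-(l1 : ℚ)) n * poch (-(l1 : ℚ) - (l2 : ℚ)) n *
          ((l1 : ℚ) + l2 + 1 - 2 * n)) := by
  constructor
  · intro hmn
    rcases lt_or_gt_of_ne hmn with h | h
    · exact JacAux.L_zero_of_lt l1 l2 L hL m n hm hn h
    · rw [mul_comm]
      exact JacAux.L_zero_of_lt l1 l2 L hL n m hn hm h
  · have hnl1 : n ≤ l1 := le_trans hn (min_le_left _ _)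
    have hnl2 : n ≤ l2 := le_trans hn (min_le_right _ _)
    rw [JacAux.L_apply l1 l2 L hL n n hnl1 hnl2, Finset.sum_range_succ,
      Finset.sum_eq_zero (fun j hj => by
        rw [JacAux.inner_sum l1 l2 n j hnl1 hnl2
            (le_trans (by have := Finset.mem_range.mp hj; omega) hnl1)
            (le_trans (by have := Finset.mem_range.mp hj; omega) hnl2),
          JacAux.poch_nat_eq_zero j n (Finset.mem_range.mp hj)]
        simp), zero_add,
      JacAux.inner_sum l1 l2 n n hnl1 hnl2 hnl1 hnl2]
    -- final scalar computation
    have h2n : 2 * n ≤ l1 + l2 := by omega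
    have hx0 : ((l1 : ℚ) + l2 + 1 - 2 * n) ≠ 0 := by
      have : (2 * (n : ℚ)) ≤ (l1 : ℚ) + l2 := by exact_mod_cast h2n
      intro h; linarith
    have hfac : ((n.factorial : ℕ) : ℚ) ≠ 0 := by exact_mod_cast n.factorial_ne_zero
    have hp3 : poch (-(l1 : ℚ)) n ≠ 0 := by
      refine JacAux.poch_ne_zero _ _ fun i hi => ?_
      have : (i : ℚ) < (l1 : ℚ) := by exact_mod_cast (by omega : i < l1)
      intro h; linarith
    have hp4 : poch (-(l1 : ℚ) - (l2 : ℚ)) n ≠ 0 := by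
      refine JacAux.poch_ne_zero _ _ fun i hi => ?_
      have : (i : ℚ) < (l1 : ℚ) + l2 := by
        have : (i : ℚ) < (l1 : ℚ) := by exact_mod_cast (by omega : i < l1)
        have : (0 : ℚ) ≤ (l2 : ℚ) := l2.cast_nonneg
        linarith
      intro h; linarith
    have hpx : poch ((l1 : ℚ) + l2 + 1 - 2 * n) n ≠ 0 := by
      refine JacAux.poch_ne_zero _ _ fun i hi => ?_
      have c1 : (2 * (n : ℚ)) ≤ (l1 : ℚ) + l2 := by exact_mod_cast h2n
      have c2 : (0 : ℚ) ≤ (i : ℚ) := i.cast_nonneg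
      intro h; linarith
    have hA := JacAux.poch_mul_reflect ((n : ℚ) - l1 - l2 - 1) n
    rw [show (1 - ((n : ℚ) - l1 - l2 - 1) - n) = ((l1 : ℚ) + l2 + 1 - 2 * n) + 1 by ring]
      at hA
    have hB := JacAux.poch_mul_reflect ((l2 : ℚ) + 1 - n) n
    rw [show (1 - ((l2 : ℚ) + 1 - n) - n) = -(l2 : ℚ) by ring] at hB
    have hS := JacAux.poch_shift ((l1 : ℚ) + l2 + 1 - 2 * n) n
    rw [show ((l1 : ℚ) + l2 + 1 - n - n) = (l1 : ℚ) + l2 + 1 - 2 * n by ring]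
    rw [JacAux.gcoef]
    set q1 := poch (-(n : ℚ)) n with hq1
    set q2 := poch ((n : ℚ) - l1 - l2 - 1) n with hq2
    set q3 := poch (-(l1 : ℚ)) n with hq3
    set q4 := poch (-(l1 : ℚ) - (l2 : ℚ)) n with hq4
    set q5 := poch ((l2 : ℚ) + 1 - n) n with hq5
    set qx := poch ((l1 : ℚ) + l2 + 1 - 2 * n) n with hqx
    set qx1 := poch (((l1 : ℚ) + l2 + 1 - 2 * n) + 1) n with hqx1
    set qB := poch (-(l2 : ℚ)) n with hqB
    set f := ((n.factorial : ℕ) : ℚ) with hf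
    rw [div_mul_div_comm, div_mul_div_comm, div_eq_div_iff
      (mul_ne_zero (mul_ne_zero hp3 hfac) (mul_ne_zero hp4 (mul_ne_zero hp3 hpx)))
      (mul_ne_zero (mul_ne_zero hp3 hp4) hx0)]
    linear_combination (q5 * q1 * ((l1:ℚ) + l2 + 1 - 2*n) * q4 * q3^2) * hA +
      (f * qx1 * ((l1:ℚ) + l2 + 1 - 2*n) * q4 * q3^2) * hB +
      (f * f * qB * q4 * q3^2) * hS
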